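/- Let L be a finite-dimensional Lie algebra and let [A/B ↘ C/D] be an m-crossing of L. Then C/D is an abelian chief factor of L. -/

import Mathlib

section ChiefFactors

variable (K : Type*) (L : Type*) [Field K] [LieRing L] [LieAlgebra K L]

/-- `A/B` is a chief factor of `L`: `B` is an ideal and `A/B` is a minimal ideal of `L/B`,
i.e. `B < A` and there is no ideal strictly between `B` and `A`. -/
def IsChiefFactor (A B : LieIdeal K L) : Prop :=
  B < A ∧ ∀ C : LieIdeal K L, B < C → C ≤ A → C = A

/-- The factor `A/B` is abelian. -/
def FactorAbelian (A B : LieIdeal K L) : Prop :=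
  ∀ a ∈ A, ∀ a' ∈ A, ⁅a, a'⁆ ∈ B

/-- `M` is a maximal (proper) subalgebra of `L`. -/
def IsMaximalSubalgebra (M : LieSubalgebra K L) : Prop :=
  M ≠ ⊤ ∧ ∀ N : LieSubalgebra K L, M < N → N = ⊤

/-- `L = A + M`. -/
def SumIsTop (A : LieIdeal K L) (M : LieSubalgebra K L) : Prop :=
  ∀ x : L, ∃ a ∈ A, ∃ m ∈ M, x = a + m

/-- `M` supplements the factor `A/B` : `L = A + M` and `B ⊆ A ∩ M`. -/
def Supplements (M : LieSubalgebra K L) (A B : LieIdeal K L) : Prop :=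
  SumIsTop K L A M ∧ B ≤ A ∧ (B : Set L) ⊆ M

/-- `M` complements the factor `A/B` : `L = A + M` and `A ∩ M = B`. -/
def Complements (M : LieSubalgebra K L) (A B : LieIdeal K L) : Prop :=
  SumIsTop K L A M ∧ (A : Set L) ∩ M = B

/-- `A/B` is a supplemented chief factor (supplemented by a maximal subalgebra). -/
def SupplementedFactor (A B : LieIdeal K L) : Prop :=
  ∃ M : LieSubalgebra K L, IsMaximalSubalgebra K L M ∧ Supplements K L M A B

/-- `A/B` is a Frattini chief factor: `A/B ⊆ φ(L/B)`, equivalently `A` is contained in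
every maximal subalgebra of `L` containing `B`. -/
def FrattiniFactor (A B : LieIdeal K L) : Prop :=
  IsChiefFactor K L A B ∧
    ∀ M : LieSubalgebra K L, IsMaximalSubalgebra K L M → (B : Set L) ⊆ M → (A : Set L) ⊆ M

/-- `A/B ↘ C/D` : `A = B + C` and `B ∩ C = D`. -/
def Searrow (A B C D : LieIdeal K L) : Prop := A = B ⊔ C ∧ B ⊓ C = D

/-- `[A/B ↘ C/D]` is an m-crossing. -/
def MCrossing (A B C D : LieIdeal K L) : Prop :=
  IsChiefFactor K L A B ∧ IsChiefFactor K L C D ∧ Searrow K L A B C D ∧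
    FrattiniFactor K L A B ∧ SupplementedFactor K L C D

/-- The chief factors `A/B` and `C/D` are m-related. -/
def MRelated (A B C D : LieIdeal K L) : Prop :=
  (∃ R S, IsChiefFactor K L R S ∧ SupplementedFactor K L R S ∧
     Searrow K L R S A B ∧ Searrow K L R S C D) ∨
  (∃ U V W X, MCrossing K L U V W X ∧ Searrow K L V X A B ∧ Searrow K L W X C D) ∨
  (∃ Y Z, FrattiniFactor K L Y Z ∧ Searrow K L A B Y Z ∧ Searrow K L C D Y Z) ∨
  (∃ U V W X, MCrossing K L U V W X ∧ Searrow K L A B U V ∧ Searrow K L C D U W)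

/-- `I` is the core `M_L` of the subalgebra `M`: the largest ideal of `L` contained in `M`. -/
def IsCoreOf (I : LieIdeal K L) (M : LieSubalgebra K L) : Prop :=
  (I : Set L) ⊆ M ∧ ∀ J : LieIdeal K L, (J : Set L) ⊆ M → J ≤ I

/-- The quotient `L/I` is primitive: it has a core-free maximal subalgebra. -/
def QuotPrimitive (I : LieIdeal K L) : Prop :=
  ∃ M : LieSubalgebra K L, IsMaximalSubalgebra K L M ∧ IsCoreOf K L I M

/-- The quotient `L/I` is monolithic: it has a unique minimal ideal. -/
def QuotMonolithic (I : LieIdeal K L) : Prop :=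
  ∃! J : LieIdeal K L, IsChiefFactor K L J I

/-- `M` is a monolithic maximal subalgebra supplementing `A/B` :
`L/M_L` is a monolithic primitive Lie algebra. -/
def MonolithicSupplement (M : LieSubalgebra K L) (A B : LieIdeal K L) : Prop :=
  IsMaximalSubalgebra K L M ∧ Supplements K L M A B ∧
    ∃ I : LieIdeal K L, IsCoreOf K L I M ∧ QuotMonolithic K L I

/-- `A/B` and `C/D` are `L`-isomorphic: there is an isomorphism of `L`-modules between
the factors which moreover preserves the induced Lie brackets. -/
def LIso (A B C D : LieIdeal K L) : Prop :=
  B ≤ A ∧ D ≤ C ∧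
  ∃ e : (A ⧸ (LieSubmodule.comap (LieSubmodule.incl A) B)) ≃ₗ⁅K,L⁆
        (C ⧸ (LieSubmodule.comap (LieSubmodule.incl C) D)),
    ∀ (a a' : A) (c c' : C),
      e (LieSubmodule.Quotient.mk a) = LieSubmodule.Quotient.mk c →
      e (LieSubmodule.Quotient.mk a') = LieSubmodule.Quotient.mk c' →
      e (LieSubmodule.Quotient.mk ⟨⁅(a : L), (a' : L)⁆, A.lie_mem a'.2⟩) =
        LieSubmodule.Quotient.mk ⟨⁅(c : L), (c' : L)⁆, C.lie_mem c'.2⟩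

/-- `L/I` is a primitive Lie algebra of type 3 with (exactly two) minimal ideals
`J1/I` and `J2/I`, both non-abelian. -/
def QuotPrimitiveType3 (I J1 J2 : LieIdeal K L) : Prop :=
  QuotPrimitive K L I ∧ J1 ≠ J2 ∧ IsChiefFactor K L J1 I ∧ IsChiefFactor K L J2 I ∧
    ¬ FactorAbelian K L J1 I ∧ ¬ FactorAbelian K L J2 I ∧
    ∀ J : LieIdeal K L, IsChiefFactor K L J I → J = J1 ∨ J = J2

/-- `A/B` and `C/D` are `L`-connected. -/
def LConnected (A B C D : LieIdeal K L) : Prop :=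
  LIso K L A B C D ∨
    ∃ I J1 J2 : LieIdeal K L, QuotPrimitiveType3 K L I J1 J2 ∧
      LIso K L J1 I A B ∧ LIso K L J2 I C D

end ChiefFactors

variable {K : Type*} {L : Type*} [Field K] [LieRing L] [LieAlgebra K L]
variable [FiniteDimensional K L]


open Module in
private lemma aux_subalg_eq_top {S : LieSubalgebra K L}
    (h : Module.finrank K S.toSubmodule = Module.finrank K L) : S = ⊤ := by
  have h2 : S.toSubmodule = ⊤ := Submodule.eq_top_of_finrank_eq h
  ext x
  simp only [LieSubalgebra.mem_top, iff_true]
  have : x ∈ S.toSubmodule := h2 ▸ Submodule.mem_top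
  exact this

private lemma aux_exists_maximal (S : LieSubalgebra K L) (hS : S ≠ ⊤) :
    ∃ M : LieSubalgebra K L, IsMaximalSubalgebra K L M ∧ S ≤ M := by
  suffices H : ∀ (k : ℕ) (S : LieSubalgebra K L),
      Module.finrank K L - Module.finrank K S.toSubmodule ≤ k → S ≠ ⊤ →
      ∃ M : LieSubalgebra K L, IsMaximalSubalgebra K L M ∧ S ≤ M from H _ S le_rfl hS
  intro k
  induction k with
  | zero =>
    intro S hle hne
    exfalso
    apply hne
    apply aux_subalg_eq_top
    have h1 : Module.finrank K S.toSubmodule ≤ Module.finrank K L := Submodule.finrank_le _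
    omega
  | succ k ih =>
    intro S hle hne
    by_cases hmax : ∀ N : LieSubalgebra K L, S < N → N = ⊤
    · exact ⟨S, ⟨hne, hmax⟩, le_rfl⟩
    · push_neg at hmax
      obtain ⟨N, hSN, hNtop⟩ := hmax
      have hsub : S.toSubmodule < N.toSubmodule := by
        rw [SetLike.lt_iff_le_and_exists] at hSN ⊢
        obtain ⟨h1, x, hx1, hx2⟩ := hSN
        exact ⟨fun y hy => h1 hy, x, hx1, hx2⟩
      have hlt : Module.finrank K S.toSubmodule < Module.finrank K N.toSubmodule :=
        Submodule.finrank_lt_finrank_of_lt hsub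
      have hleL : Module.finrank K N.toSubmodule ≤ Module.finrank K L := Submodule.finrank_le _
      obtain ⟨M, hM, hNM⟩ := ih N (by omega) hNtop
      exact ⟨M, hM, hSN.le.trans hNM⟩

omit [FiniteDimensional K L] in
private lemma aux_ad_pow_lie (x y z : L) (m : ℕ) :
    ((LieAlgebra.ad K L x) ^ m) ⁅y, z⁆ ∈
      Submodule.span K {w : L | ∃ i j : ℕ, i + j = m ∧
        w = ⁅((LieAlgebra.ad K L x) ^ i) y, ((LieAlgebra.ad K L x) ^ j) z⁆} := by
  set f := LieAlgebra.ad K L x with hf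
  induction m with
  | zero =>
    apply Submodule.subset_span
    exact ⟨0, 0, rfl, by simp⟩
  | succ m ih =>
    have hstep : (f ^ (m + 1)) ⁅y, z⁆ = f ((f ^ m) ⁅y, z⁆) := by
      rw [pow_succ']; rfl
    rw [hstep]
    refine Submodule.span_induction ?_ ?_ ?_ ?_ ih
    · rintro w ⟨i, j, hij, rfl⟩
      have h1 : f ⁅(f ^ i) y, (f ^ j) z⁆ =
          ⁅(f ^ (i + 1)) y, (f ^ j) z⁆ + ⁅(f ^ i) y, (f ^ (j + 1)) z⁆ := by
        have e1 : (f ^ (i+1)) y = f ((f ^ i) y) := by rw [pow_succ']; rfl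
        have e2 : (f ^ (j+1)) z = f ((f ^ j) z) := by rw [pow_succ']; rfl
        rw [e1, e2]
        simp only [hf, LieAlgebra.ad_apply]
        exact leibniz_lie x _ _
      rw [h1]
      refine Submodule.add_mem _ (Submodule.subset_span ⟨i+1, j, by omega, rfl⟩)
        (Submodule.subset_span ⟨i, j+1, by omega, rfl⟩)
    · simp
    · intro a b _ _ ha hb
      rw [map_add]; exact Submodule.add_mem _ ha hb
    · intro t a _ ha
      rw [map_smul]; exact Submodule.smul_mem _ t ha

theorem stmt10 (A B C D : LieIdeal K L)
    (hcross : MCrossing K L A B C D) :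
    FactorAbelian K L C D := by
  obtain ⟨hAB, hCD, ⟨hsea1, hsea2⟩, hFr, hSup⟩ := hcross
  by_contra hna
  have hDC : D ≤ C := by rw [← hsea2]; exact inf_le_right
  have hBA : B ≤ A := by rw [hsea1]; exact le_sup_left
  have hCA : C ≤ A := by rw [hsea1]; exact le_sup_right
  -- the centralizer of C/D in L
  let Z : LieIdeal K L :=
    { carrier := {w : L | ∀ c ∈ C, ⁅w, c⁆ ∈ D}
      add_mem' := by
        intro a b ha hb c hc
        rw [add_lie]
        exact D.add_mem (ha c hc) (hb c hc)
      zero_mem' := by intro c hc; rw [zero_lie]; exact D.zero_mem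
      smul_mem' := by
        intro t a ha c hc
        rw [smul_lie]
        exact D.smul_mem t (ha c hc)
      lie_mem := by
        intro w z hz c hc
        have h1 : ⁅w, ⁅z, c⁆⁆ = ⁅⁅w, z⁆, c⁆ + ⁅z, ⁅w, c⁆⁆ := leibniz_lie w z c
        have h2 : ⁅⁅w, z⁆, c⁆ = ⁅w, ⁅z, c⁆⁆ - ⁅z, ⁅w, c⁆⁆ := by rw [h1]; abel
        rw [h2]
        exact D.sub_mem (D.lie_mem (hz c hc)) (hz _ (C.lie_mem hc)) }
  have hmemZ : ∀ w : L, w ∈ Z ↔ ∀ c ∈ C, ⁅w, c⁆ ∈ D := fun w => Iff.rfl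
  have hBZ : B ≤ Z := by
    intro b hb
    intro c hc
    have h1 : ⁅b, c⁆ ∈ B := lie_mem_left K L B b c hb
    have h2 : ⁅b, c⁆ ∈ C := C.lie_mem hc
    rw [← hsea2]
    exact (LieSubmodule.mem_inf _ _ _).mpr ⟨h1, h2⟩
  have hDZ : D ≤ Z := by
    intro d hd c hc
    exact lie_mem_left K L D d c hd
  have hZCD : Z ⊓ C = D := by
    by_contra hne
    have h1 : D < Z ⊓ C := lt_of_le_of_ne (le_inf hDZ hDC) (Ne.symm hne)
    have h2 := hCD.2 _ h1 inf_le_right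
    apply hna
    intro a ha a' ha'
    have h3 : a ∈ Z ⊓ C := by rw [h2]; exact ha
    exact ((LieSubmodule.mem_inf _ _ _).mp h3).1 a' ha'
  have key : ∀ x ∈ C, ∃ n : ℕ, 1 ≤ n ∧ ∀ y ∈ C, ((LieAlgebra.ad K L x) ^ n) y ∈ D := by
    intro x hx
    set f := LieAlgebra.ad K L x with hfdef
    set Z' : Submodule K L := Z.toSubmodule with hZ'
    have hfZ : ∀ w ∈ Z', f w ∈ Z' := fun w hw => Z.lie_mem hw
    have hfZpow : ∀ (m : ℕ) (w : L), w ∈ Z' → (f ^ m) w ∈ Z' := by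
      intro m
      induction m with
      | zero => intro w hw; simpa using hw
      | succ m ih =>
        intro w hw
        have hh : (f ^ (m + 1)) w = f ((f ^ m) w) := by rw [pow_succ']; rfl
        rw [hh]; exact hfZ _ (ih w hw)
    have hfCmem : ∀ w : L, f w ∈ C := fun w => lie_mem_left K L C x w hx
    have hfCpow : ∀ (m : ℕ) (w : L), w ∈ C → (f ^ m) w ∈ C := by
      intro m
      induction m with
      | zero => intro w hw; simpa using hw
      | succ m ih =>
        intro w hw
        have hh : (f ^ (m + 1)) w = f ((f ^ m) w) := by rw [pow_succ']; rfl
        rw [hh]; exact C.lie_mem (ih w hw)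
    have hfpow1C : ∀ (m : ℕ), 1 ≤ m → ∀ w : L, (f ^ m) w ∈ C := by
      intro m hm w
      obtain ⟨m', rfl⟩ : ∃ m', m = m' + 1 := ⟨m - 1, by omega⟩
      have hh : (f ^ (m' + 1)) w = (f ^ m') (f w) := by rw [pow_succ]; rfl
      rw [hh]; exact hfCpow m' _ (hfCmem w)
    have hmono : Monotone fun i : ℕ => Z'.comap (f ^ i) := by
      apply monotone_nat_of_le_succ
      intro i w hw
      simp only [Submodule.mem_comap] at hw ⊢
      have hh : (f ^ (i + 1)) w = f ((f ^ i) w) := by rw [pow_succ']; rfl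
      rw [hh]; exact hfZ _ hw
    obtain ⟨n₀, hn₀⟩ := monotone_stabilizes_iff_noetherian.mpr inferInstance
      ⟨fun i : ℕ => Z'.comap (f ^ i), hmono⟩
    have hfZle : Z' ≤ Z'.comap f := fun w hw => hfZ w hw
    set fq : (L ⧸ Z') →ₗ[K] (L ⧸ Z') := Z'.mapQ Z' f hfZle with hfq
    obtain ⟨n₁, hn₁⟩ := Filter.eventually_atTop.mp
      (LinearMap.eventually_codisjoint_ker_pow_range_pow fq)
    set n := max (max n₀ n₁) 1 with hndef
    have hn1 : 1 ≤ n := le_max_right _ _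
    have hstab : ∀ m, n ≤ m → Z'.comap (f ^ n) = Z'.comap (f ^ m) := by
      intro m hm
      have h1 := hn₀ n (le_trans (le_max_left _ _) (le_max_left _ _))
      have h2 := hn₀ m (le_trans (le_trans (le_max_left _ _) (le_max_left _ _)) hm)
      exact h1.symm.trans h2
    have hcomm : ∀ (m : ℕ) (y : L), (fq ^ m) (Z'.mkQ y) = Z'.mkQ ((f ^ m) y) := by
      intro m y
      rw [hfq, ← Submodule.mapQ_pow, Submodule.mkQ_apply, Submodule.mapQ_apply,
        Submodule.mkQ_apply]
    set Ksub : Submodule K L := Z'.comap (f ^ n) with hKsubdef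
    have hZK : Z' ≤ Ksub := fun w hw => hfZpow n w hw
    have hlie : ∀ {y z : L}, y ∈ Ksub → z ∈ Ksub → ⁅y, z⁆ ∈ Ksub := by
      intro y z hy hz
      have h2n : (f ^ (n + n)) ⁅y, z⁆ ∈ Z' := by
        have hspan := aux_ad_pow_lie (K := K) x y z (n + n)
        rw [← hfdef] at hspan
        refine Submodule.span_le.mpr ?_ hspan
        rintro w ⟨i, j, hij, rfl⟩
        rcases le_or_gt n i with hi | hi
        · have hyi : (f ^ i) y ∈ Z' := by
            obtain ⟨i', rfl⟩ : ∃ i', i = i' + n := ⟨i - n, by omega⟩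
            have hh : (f ^ (i' + n)) y = (f ^ i') ((f ^ n) y) := by rw [pow_add]; rfl
            rw [hh]; exact hfZpow i' _ hy
          exact lie_mem_left K L Z _ _ hyi
        · have hj : n ≤ j := by omega
          have hzj : (f ^ j) z ∈ Z' := by
            obtain ⟨j', rfl⟩ : ∃ j', j = j' + n := ⟨j - n, by omega⟩
            have hh : (f ^ (j' + n)) z = (f ^ j') ((f ^ n) z) := by rw [pow_add]; rfl
            rw [hh]; exact hfZpow j' _ hz
          exact lie_mem_right K L Z _ _ hzj
      have hst := hstab (n + n) (by omega)
      have hmm : ⁅y, z⁆ ∈ Submodule.comap (f ^ (n + n)) Z' := Submodule.mem_comap.mpr h2n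
      rw [← hst] at hmm
      exact hmm
    set Kalg : LieSubalgebra K L := { Ksub with lie_mem' := fun ha hb => hlie ha hb }
      with hKalgdef
    by_cases hKtop : Kalg = ⊤
    · refine ⟨n, hn1, fun y hy => ?_⟩
      have h1 : y ∈ Ksub := by
        have hh : y ∈ Kalg := by rw [hKtop]; exact LieSubalgebra.mem_top y
        exact hh
      have h2 : (f ^ n) y ∈ Z' := h1
      have h3 : (f ^ n) y ∈ C := hfCpow n y hy
      have h4 : (f ^ n) y ∈ Z ⊓ C := (LieSubmodule.mem_inf _ _ _).mpr ⟨h2, h3⟩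
      rw [hZCD] at h4
      exact h4
    · exfalso
      obtain ⟨M', hM'max, hKM'⟩ := aux_exists_maximal Kalg hKtop
      have hBM' : (B : Set L) ⊆ M' := fun b hb => hKM' (hZK (hBZ hb))
      have hAM' := hFr.2 M' hM'max hBM'
      have hCM' : ∀ c ∈ C, c ∈ M' := fun c hc => hAM' (hCA hc)
      apply hM'max.1
      rw [eq_top_iff]
      intro w _
      have hcod := hn₁ n (le_trans (le_max_right _ _) (le_max_left _ _))
      have hw : Z'.mkQ w ∈ LinearMap.ker (fq ^ n) ⊔ LinearMap.range (fq ^ n) := by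
        rw [codisjoint_iff.mp hcod]; exact Submodule.mem_top
      obtain ⟨u, hu, v, hv, huv⟩ := Submodule.mem_sup.mp hw
      obtain ⟨t', ht'⟩ := hv
      obtain ⟨t, rfl⟩ := Submodule.mkQ_surjective Z' t'
      have hveq : v = Z'.mkQ ((f ^ n) t) := by rw [← ht', hcomm]
      have hKmem : w - (f ^ n) t ∈ Ksub := by
        have h5 : Z'.mkQ (w - (f ^ n) t) = u := by
          rw [map_sub, ← hveq, ← huv]; abel
        have h6 : (fq ^ n) (Z'.mkQ (w - (f ^ n) t)) = 0 := by
          rw [h5]; exact hu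
        rw [hcomm] at h6
        have h7 : (f ^ n) (w - (f ^ n) t) ∈ Z' := by
          rwa [Submodule.mkQ_apply, Submodule.Quotient.mk_eq_zero] at h6
        exact h7
      have hCmem : (f ^ n) t ∈ C := hfpow1C n hn1 t
      have hsplit : w = (w - (f ^ n) t) + (f ^ n) t := by abel
      rw [hsplit]
      exact M'.add_mem (hKM' hKmem) (hCM' _ hCmem)
  -- `D` as an ideal (Lie submodule) of the Lie algebra `C`
  let D' : LieSubmodule K (↥C) (↥C) :=
    { carrier := {y : ↥C | (y : L) ∈ D}
      add_mem' := by intro a b ha hb; exact D.add_mem ha hb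
      zero_mem' := D.zero_mem
      smul_mem' := by intro t a ha; exact D.smul_mem t ha
      lie_mem := by
        intro xc m hm
        have hh : ((⁅xc, m⁆ : ↥C) : L) = ⁅(xc : L), (m : L)⁆ := rfl
        show ((⁅xc, m⁆ : ↥C) : L) ∈ D
        rw [hh]
        exact D.lie_mem hm }
  have hmk_eq_zero : ∀ (yc : ↥C), LieSubmodule.Quotient.mk' D' yc = 0 ↔ (yc : L) ∈ D :=
    fun yc => LieSubmodule.Quotient.mk_eq_zero D'
  -- iterates of the action on the quotient
  have had : ∀ (xc : ↥C) (m : ℕ) (yc : ↥C), ∃ c : ↥C,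
      ((LieModule.toEnd K (↥C) ((↥C) ⧸ D') xc) ^ m) (LieSubmodule.Quotient.mk' D' yc)
        = LieSubmodule.Quotient.mk' D' c ∧
        (c : L) = ((LieAlgebra.ad K L ↑xc) ^ m) ↑yc := by
    intro xc m
    induction m with
    | zero => intro yc; exact ⟨yc, by simp, by simp⟩
    | succ m ih =>
      intro yc
      obtain ⟨c, hc1, hc2⟩ := ih yc
      refine ⟨⁅xc, c⁆, ?_, ?_⟩
      · have hh : ((LieModule.toEnd K (↥C) ((↥C) ⧸ D') xc) ^ (m + 1))
            (LieSubmodule.Quotient.mk' D' yc)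
            = (LieModule.toEnd K (↥C) ((↥C) ⧸ D') xc)
              (((LieModule.toEnd K (↥C) ((↥C) ⧸ D') xc) ^ m)
                (LieSubmodule.Quotient.mk' D' yc)) := by
          rw [pow_succ']; rfl
        rw [hh, hc1]
        rfl
      · have h1 : ((⁅xc, c⁆ : ↥C) : L) = ⁅(xc : L), (c : L)⁆ := rfl
        have h2 : ((LieAlgebra.ad K L ↑xc) ^ (m + 1)) ↑yc
            = (LieAlgebra.ad K L ↑xc) (((LieAlgebra.ad K L ↑xc) ^ m) ↑yc) := by
          rw [pow_succ']; rfl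
        rw [h1, h2, hc2, LieAlgebra.ad_apply]
  -- Engel's theorem: the quotient C/D is a nilpotent C-module
  have hnilQ : LieModule.IsNilpotent (↥C) ((↥C) ⧸ D') := by
    rw [LieModule.isNilpotent_iff_forall' (R := K)]
    intro xc
    obtain ⟨nn, hnn1, hnn⟩ := key ↑xc xc.2
    refine ⟨nn, ?_⟩
    ext q
    obtain ⟨yc, rfl⟩ := LieSubmodule.Quotient.surjective_mk' D' q
    obtain ⟨c, hc1, hc2⟩ := had xc nn yc
    rw [LinearMap.zero_apply, hc1]
    rw [hmk_eq_zero c, hc2]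
    exact hnn ↑yc yc.2
  -- by non-abelianness and chiefness, ⁅C,C⁆ ⊔ D = C
  have hCCD : ((⁅C, C⁆ : LieIdeal K L) ⊔ D) = C := by
    apply hCD.2
    · rw [lt_iff_le_and_ne]
      refine ⟨le_sup_right, ?_⟩
      intro heq
      unfold FactorAbelian at hna
      push_neg at hna
      obtain ⟨a, ha, a', ha', hnaa⟩ := hna
      apply hnaa
      have h1 : ⁅a, a'⁆ ∈ (⁅C, C⁆ : LieIdeal K L) := LieSubmodule.lie_mem_lie ha ha'
      rw [heq]
      exact (le_sup_left : (⁅C, C⁆ : LieIdeal K L) ≤ ⁅C, C⁆ ⊔ D) h1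
    · exact sup_le (LieSubmodule.lie_le_left C C) hDC
  -- hence ⁅⊤, ⊤⁆ = ⊤ in the quotient
  have hBr : ∀ q : (↥C) ⧸ D',
      q ∈ ⁅(⊤ : LieIdeal K (↥C)), (⊤ : LieSubmodule K (↥C) ((↥C) ⧸ D'))⁆ := by
    intro q
    obtain ⟨yc, rfl⟩ := LieSubmodule.Quotient.surjective_mk' D' q
    set S := (⁅(⊤ : LieIdeal K (↥C)), (⊤ : LieSubmodule K (↥C) ((↥C) ⧸ D'))⁆ :
      LieSubmodule K (↥C) ((↥C) ⧸ D')) with hS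
    let T : Submodule K L :=
      { carrier := {w : L | ∃ hw : w ∈ C, LieSubmodule.Quotient.mk' D' ⟨w, hw⟩ ∈ S}
        add_mem' := by
          rintro a b ⟨ha, ha'⟩ ⟨hb, hb'⟩
          refine ⟨C.add_mem ha hb, ?_⟩
          have hh : LieSubmodule.Quotient.mk' D' ⟨a + b, C.add_mem ha hb⟩
              = LieSubmodule.Quotient.mk' D' ⟨a, ha⟩ + LieSubmodule.Quotient.mk' D' ⟨b, hb⟩ := rfl
          rw [hh]
          exact S.add_mem ha' hb'
        zero_mem' := by
          refine ⟨C.zero_mem, ?_⟩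
          have hh : LieSubmodule.Quotient.mk' D' ⟨(0 : L), C.zero_mem⟩
              = (0 : (↥C) ⧸ D') := rfl
          rw [hh]
          exact S.zero_mem
        smul_mem' := by
          rintro t a ⟨ha, ha'⟩
          refine ⟨C.smul_mem t ha, ?_⟩
          have hh : LieSubmodule.Quotient.mk' D' ⟨t • a, C.smul_mem t ha⟩
              = t • LieSubmodule.Quotient.mk' D' ⟨a, ha⟩ := rfl
          rw [hh]
          exact S.smul_mem t ha' }
    have hTle : LieSubmodule.toSubmodule (⁅C, C⁆ : LieIdeal K L) ≤ T := by
      rw [LieSubmodule.lieIdeal_oper_eq_linear_span']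
      apply Submodule.span_le.mpr
      rintro w ⟨a, ha, b, hb, rfl⟩
      refine ⟨C.lie_mem hb, ?_⟩
      have hq : LieSubmodule.Quotient.mk' D' ⟨⁅a, b⁆, C.lie_mem hb⟩
          = ⁅(⟨a, ha⟩ : ↥C), LieSubmodule.Quotient.mk' D' ⟨b, hb⟩⁆ := rfl
      rw [hq]
      exact LieSubmodule.lie_mem_lie (LieSubmodule.mem_top _) (LieSubmodule.mem_top _)
    have hyC : (yc : L) ∈ ((⁅C, C⁆ : LieIdeal K L) ⊔ D) := by rw [hCCD]; exact yc.2
    obtain ⟨e, he, d, hd, hed⟩ := (LieSubmodule.mem_sup _ _ _).mp hyC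
    obtain ⟨heC, heS⟩ := hTle he
    have hdC : d ∈ C := hDC hd
    have hsplit : yc = (⟨e, heC⟩ : ↥C) + ⟨d, hdC⟩ := by
      apply Subtype.ext
      rw [AddMemClass.coe_add]
      exact hed.symm
    have haddq : LieSubmodule.Quotient.mk' D' yc
        = LieSubmodule.Quotient.mk' D' ⟨e, heC⟩ + LieSubmodule.Quotient.mk' D' ⟨d, hdC⟩ := by
      rw [hsplit]; rfl
    rw [haddq]
    have hd0 : LieSubmodule.Quotient.mk' D' ⟨d, hdC⟩ = 0 := (hmk_eq_zero _).mpr hd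
    rw [hd0, add_zero]
    exact heS
  have htop : ∀ k, LieModule.lowerCentralSeries K (↥C) ((↥C) ⧸ D') k = ⊤ := by
    intro k
    induction k with
    | zero => exact LieModule.lowerCentralSeries_zero K (↥C) ((↥C) ⧸ D')
    | succ k ih =>
      rw [LieModule.lowerCentralSeries_succ, ih]
      refine le_antisymm le_top ?_
      intro q _
      exact hBr q
  obtain ⟨k, hk⟩ := LieModule.IsNilpotent.nilpotent K (↥C) ((↥C) ⧸ D')
  obtain ⟨c₀, hc₀C, hc₀D⟩ := SetLike.exists_of_lt hCD.1
  have hfin : LieSubmodule.Quotient.mk' D' ⟨c₀, hc₀C⟩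
      ∈ (⊥ : LieSubmodule K (↥C) ((↥C) ⧸ D')) := by
    rw [← hk, htop k]
    exact LieSubmodule.mem_top _
  rw [LieSubmodule.mem_bot] at hfin
  exact hc₀D ((hmk_eq_zero _).mp hfin)
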